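/- With the setup of the appendix, for every φ ∈ ℝ: u_Lᵀ·Ω_R·R_R(π+φ)·R_L(π+φ)·u_R = 4 r² (1-r²) sin φ · (cos φ + (2r² - 1)(1 + cos φ)), and the same formula holds for u_Lᵀ·R_R(π+φ)·R_L(π+φ)·Ω_L·u_R. -/

import Mathlib

open Matrix Real

private lemma pow_odd_aux {A : Matrix (Fin 3) (Fin 3) ℝ} (h : A ^ 3 = -A) (k : ℕ) :
    A ^ (2 * k + 1) = ((-1 : ℝ) ^ k) • A := by
  induction k with
  | zero => simp
  | succ n ih =>
    have e : 2 * (n + 1) + 1 = (2 * n + 1) + 2 := by ring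
    rw [e, pow_add, ih, smul_mul_assoc]
    have h3 : A * A ^ 2 = A ^ 3 := (pow_succ' A 2).symm
    rw [h3, h, pow_succ]
    module

private lemma pow_even_aux {A : Matrix (Fin 3) (Fin 3) ℝ} (h : A ^ 3 = -A) (k : ℕ) :
    A ^ (2 * (k + 1)) = ((-1 : ℝ) ^ k) • (A * A) := by
  have e : 2 * (k + 1) = (2 * k + 1) + 1 := by ring
  rw [e, pow_succ, pow_odd_aux h, smul_mul_assoc]

private lemma rodrigues (A : Matrix (Fin 3) (Fin 3) ℝ) (h : A ^ 3 = -A) (θ : ℝ) :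
    NormedSpace.exp (θ • A)
      = 1 + Real.sin θ • A + (1 - Real.cos θ) • (A * A) := by
  rw [NormedSpace.exp_eq_tsum (𝕂 := ℝ)]
  refine HasSum.tsum_eq ?_
  have hf : (fun n : ℕ => ((n.factorial : ℝ)⁻¹) • (θ • A) ^ n)
      = fun n : ℕ => (θ ^ n / n.factorial) • A ^ n := by
    funext n
    rw [smul_pow, smul_smul, div_eq_inv_mul]
  rw [hf]
  have hodd : HasSum (fun k : ℕ => (θ ^ (2 * k + 1) / (2 * k + 1).factorial) • A ^ (2 * k + 1))
      (Real.sin θ • A) := by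
    have h1 := (Real.hasSum_sin θ).smul_const A
    convert h1 using 2 with k
    rw [pow_odd_aux h, smul_smul]
    congr 1
    ring
  have htail : HasSum (fun k : ℕ =>
      ((-1 : ℝ) ^ (k + 1) * θ ^ (2 * (k + 1)) / ((2 * (k + 1)).factorial : ℝ)))
      (Real.cos θ - 1) := by
    refine (hasSum_nat_add_iff
      (f := fun n : ℕ => ((-1 : ℝ) ^ n * θ ^ (2 * n) / ((2 * n).factorial : ℝ))) 1).mpr ?_
    convert Real.hasSum_cos θ using 1
    · rfl
    simp
  have heven' : HasSum (fun k : ℕ =>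
      (θ ^ (2 * (k + 1)) / (2 * (k + 1)).factorial) • A ^ (2 * (k + 1)))
      ((1 - Real.cos θ) • (A * A)) := by
    have h2 := (htail.smul_const (A * A)).neg
    have e1 : (fun k : ℕ =>
        -((((-1 : ℝ) ^ (k + 1) * θ ^ (2 * (k + 1)) / ((2 * (k + 1)).factorial : ℝ))) • (A * A)))
        = fun k : ℕ => (θ ^ (2 * (k + 1)) / (2 * (k + 1)).factorial) • A ^ (2 * (k + 1)) := by
      funext k
      rw [pow_even_aux h, smul_smul, ← neg_smul]
      congr 1
      ring
    have e2 : -((Real.cos θ - 1) • (A * A)) = (1 - Real.cos θ) • (A * A) := by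
      rw [← neg_smul]
      congr 1
      ring
    rw [e1, e2] at h2
    exact h2
  have heven : HasSum (fun k : ℕ => (θ ^ (2 * k) / (2 * k).factorial) • A ^ (2 * k))
      (1 + (1 - Real.cos θ) • (A * A)) := by
    have h3 := HasSum.zero_add
      (f := fun k : ℕ => (θ ^ (2 * k) / ((2 * k).factorial : ℝ)) • A ^ (2 * k)) heven'
    have e0 : (θ ^ (2 * 0) / (((2 * 0).factorial : ℕ) : ℝ)) • A ^ (2 * 0)
        + (1 - Real.cos θ) • (A * A) = 1 + (1 - Real.cos θ) • (A * A) := by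
      norm_num
    rw [e0] at h3
    exact h3
  have h4 := HasSum.even_add_odd
    (f := fun n : ℕ => (θ ^ n / (n.factorial : ℝ)) • A ^ n) heven hodd
  convert h4 using 1
  · rfl
  abel

set_option maxHeartbeats 1000000 in
theorem stmt_13 (r : ℝ) (hr : r ∈ Set.Ioo (0:ℝ) 1) (φ : ℝ) :
    let kx : ℝ := Real.sqrt (1 - r ^ 2)
    let ΩL : Matrix (Fin 3) (Fin 3) ℝ := !![0, r, 0; -r, 0, kx; 0, -kx, 0]
    let ΩR : Matrix (Fin 3) (Fin 3) ℝ := !![0, r, 0; -r, 0, -kx; 0, kx, 0]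
    let uL : Fin 3 → ℝ := ![kx, 0, r]
    let uR : Fin 3 → ℝ := ![-kx, 0, r]
    let RL : ℝ → Matrix (Fin 3) (Fin 3) ℝ := fun θ => NormedSpace.exp (θ • ΩL)
    let RR : ℝ → Matrix (Fin 3) (Fin 3) ℝ := fun θ => NormedSpace.exp (θ • ΩR)
    uL ⬝ᵥ (ΩR * RR (π + φ) * RL (π + φ)).mulVec uR
      = 4 * r ^ 2 * (1 - r ^ 2) * Real.sin φ * (Real.cos φ + (2 * r ^ 2 - 1) * (1 + Real.cos φ)) ∧
    uL ⬝ᵥ (RR (π + φ) * RL (π + φ) * ΩL).mulVec uR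
      = 4 * r ^ 2 * (1 - r ^ 2) * Real.sin φ * (Real.cos φ + (2 * r ^ 2 - 1) * (1 + Real.cos φ)) := by
  intro kx ΩL ΩR uL uR RL RR
  have hr2 : (0:ℝ) ≤ 1 - r ^ 2 := by nlinarith [hr.1, hr.2]
  have hk : kx ^ 2 = 1 - r ^ 2 := Real.sq_sqrt hr2
  have hk' : kx * kx = 1 - r ^ 2 := by rw [← hk]; ring
  set s := Real.sin φ with hsdef
  set c := Real.cos φ with hcdef
  have hL3 : ΩL ^ 3 = -ΩL := by
    have e3 : ΩL ^ 3 = ΩL * ΩL * ΩL := by rw [pow_succ, pow_two]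
    rw [e3]
    ext i j
    fin_cases i <;> fin_cases j <;>
      simp [ΩL, Matrix.mul_apply, Fin.sum_univ_three] <;>
      first
        | linear_combination (-r) * hk'
        | linear_combination r * hk'
        | linear_combination (-kx) * hk'
        | linear_combination kx * hk'
  have hR3 : ΩR ^ 3 = -ΩR := by
    have e3 : ΩR ^ 3 = ΩR * ΩR * ΩR := by rw [pow_succ, pow_two]
    rw [e3]
    ext i j
    fin_cases i <;> fin_cases j <;>
      simp [ΩR, Matrix.mul_apply, Fin.sum_univ_three] <;>
      first
        | linear_combination (-r) * hk'
        | linear_combination r * hk'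
        | linear_combination (-kx) * hk'
        | linear_combination kx * hk'
  have hs : Real.sin (π + φ) = -s := by rw [Real.sin_add]; simp [hsdef]
  have hc : Real.cos (π + φ) = -c := by rw [Real.cos_add]; simp [hcdef]
  have hRR : RR (π + φ) =
      !![1 - r^2 - r^2*c, -(r*s), -(kx*r) - kx*r*c;
         r*s, 1 - r^2 - r^2*c - kx^2 - kx^2*c, kx*s;
         -(kx*r) - kx*r*c, -(kx*s), 1 - kx^2 - kx^2*c] := by
    rw [show RR (π + φ) = NormedSpace.exp ((π + φ) • ΩR) from rfl,
      rodrigues ΩR hR3, hs, hc]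
    ext i j
    fin_cases i <;> fin_cases j <;>
      simp [ΩR, Matrix.mul_apply, Fin.sum_univ_three, Matrix.one_apply] <;> ring
  have hRL : RL (π + φ) =
      !![1 - r^2 - r^2*c, -(r*s), kx*r + kx*r*c;
         r*s, 1 - r^2 - r^2*c - kx^2 - kx^2*c, -(kx*s);
         kx*r + kx*r*c, kx*s, 1 - kx^2 - kx^2*c] := by
    rw [show RL (π + φ) = NormedSpace.exp ((π + φ) • ΩL) from rfl,
      rodrigues ΩL hL3, hs, hc]
    ext i j
    fin_cases i <;> fin_cases j <;>
      simp [ΩL, Matrix.mul_apply, Fin.sum_univ_three, Matrix.one_apply] <;> ring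
  refine ⟨?_, ?_⟩ <;>
    rw [hRR, hRL] <;>
    simp only [ΩL, ΩR, uL, uR, Matrix.mulVec, Matrix.mul_apply, dotProduct,
      Fin.sum_univ_three, Matrix.cons_val', Matrix.cons_val_zero, Matrix.cons_val_one,
      Matrix.head_cons, Matrix.empty_val', Matrix.cons_val_fin_one, Matrix.head_fin_const,
      Matrix.cons_val_two, Matrix.tail_cons, Matrix.of_apply] <;>
    linear_combination (8 * r ^ 4 * s * c + 8 * r ^ 4 * s - 4 * r ^ 2 * s) * hk
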